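/- arXiv:1702.00068 — 6 statements merged into one kernel-verified Lean document; each statement's English description precedes it below -/
import Mathlib

section
/- Let g ≥ 1, set n = 2g−1, and let T : M → M be the ℤ-linear 'Cremona pushforward' map for this n (so M has basis h, ε₁, …, ε_{2g}). Then T fixes the class g·h − (g−1)·∑_{i=1}^{2g} ε_i. (This is the computation showing that the standard Cremona transformation of ℙ^{2g−1} preserves the linear system L_{2g−1} of degree-g hypersurfaces with points of multiplicity g−1 at the fundamental points, hence induces an automorphism of the GIT quotient Σ_{2g−1}.) -/
/-- **The Cremona transformation of `ℙ^{2g-1}` preserves the linear system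
`L_{2g-1}`.**  For `n = 2g - 1`, `M = ℤ × (Fin (2g) → ℤ)` models the free
`ℤ`-module with basis `h = (1, 0)` and `ε i = (0, Pi.single i 1)`
(`i = 1, …, 2g`).  If `T` is the `ℤ`-linear map determined by
`T h = n•h - (n-1)•∑ εᵢ` and `T (ε i) = h - ∑_{j ≠ i} ε j` (with
`n = 2g - 1`), then `T` fixes the class `g•h - (g-1)•∑ εᵢ`. -/
theorem cremona_fixes_segre_class (g : ℕ) (hg : 1 ≤ g)
    (T : (ℤ × (Fin (2 * g) → ℤ)) →ₗ[ℤ] (ℤ × (Fin (2 * g) → ℤ)))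
    (hh : T ((1 : ℤ), (0 : Fin (2 * g) → ℤ)) =
      ((2 * (g : ℤ) - 1), fun _ => -((2 * (g : ℤ) - 1) - 1)))
    (he : ∀ i : Fin (2 * g), T ((0 : ℤ), Pi.single i (1 : ℤ)) =
      ((1 : ℤ), fun j => if j = i then 0 else -1)) :
    T ((g : ℤ) • ((1 : ℤ), (0 : Fin (2 * g) → ℤ)) -
        ((g : ℤ) - 1) • ∑ i, ((0 : ℤ), Pi.single i (1 : ℤ))) =
      (g : ℤ) • ((1 : ℤ), (0 : Fin (2 * g) → ℤ)) -
        ((g : ℤ) - 1) • ∑ i, ((0 : ℤ), Pi.single i (1 : ℤ)) := by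
  have hcard : (Finset.univ : Finset (Fin (2 * g))).card = 2 * g := by simp
  simp only [map_sub, map_smul, map_sum, hh, he]
  apply Prod.ext
  · simp [Prod.fst_sum, hcard]
    ring
  · funext j
    have hsum : (∑ x : Fin (2*g), if j = x then (0:ℤ) else -1) = 1 - 2*g := by
      have h1 : ∀ x, (if j = x then (0:ℤ) else -1) = (if j = x then 1 else 0) - 1 := by
        intro x; split <;> ring
      simp [h1, Finset.sum_sub_distrib, hcard]
    simp [Prod.snd_sum, Finset.sum_ite_eq, hcard, Finset.sum_apply,
      Pi.single_apply, Finset.sum_sub_distrib, sub_eq_iff_eq_add, hsum]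
    ring
end

section
/- Let g ≥ 1, set n = 2g, and let T : M → M be the ℤ-linear 'Cremona pushforward' map for this n (so M has basis h, ε₁, …, ε_{2g+1}). Then T fixes the class (2g+1)·h − (2g−1)·∑_{i=1}^{2g+1} ε_i. (This is the computation showing that the standard Cremona transformation of ℙ^{2g} preserves the linear system L_{2g} of degree-(2g+1) hypersurfaces with points of multiplicity 2g−1 at the fundamental points, hence induces an automorphism of the GIT quotient Σ_{2g}.) -/
/-- **The Cremona transformation of `ℙ^{2g}` preserves the linear system
`L_{2g}`.**  For `n = 2g`, `M = ℤ × (Fin (2g+1) → ℤ)` models the free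
`ℤ`-module with basis `h = (1, 0)` and `ε i = (0, Pi.single i 1)`
(`i = 1, …, 2g+1`).  If `T` is the `ℤ`-linear map determined by
`T h = n•h - (n-1)•∑ εᵢ` and `T (ε i) = h - ∑_{j ≠ i} ε j` (with
`n = 2g`), then `T` fixes the class `(2g+1)•h - (2g-1)•∑ εᵢ`. -/
theorem cremona_fixes_even_class (g : ℕ) (hg : 1 ≤ g)
    (T : (ℤ × (Fin (2 * g + 1) → ℤ)) →ₗ[ℤ] (ℤ × (Fin (2 * g + 1) → ℤ)))
    (hh : T ((1 : ℤ), (0 : Fin (2 * g + 1) → ℤ)) =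
      ((2 * (g : ℤ)), fun _ => -(2 * (g : ℤ) - 1)))
    (he : ∀ i : Fin (2 * g + 1), T ((0 : ℤ), Pi.single i (1 : ℤ)) =
      ((1 : ℤ), fun j => if j = i then 0 else -1)) :
    T ((2 * (g : ℤ) + 1) • ((1 : ℤ), (0 : Fin (2 * g + 1) → ℤ)) -
        (2 * (g : ℤ) - 1) • ∑ i, ((0 : ℤ), Pi.single i (1 : ℤ))) =
      (2 * (g : ℤ) + 1) • ((1 : ℤ), (0 : Fin (2 * g + 1) → ℤ)) -
        (2 * (g : ℤ) - 1) • ∑ i, ((0 : ℤ), Pi.single i (1 : ℤ)) := by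
  have hsum : ∑ i, ((0 : ℤ), Pi.single i (1 : ℤ)) =
      ((0 : ℤ), fun _ : Fin (2 * g + 1) => (1 : ℤ)) := by
    ext j
    · simp [Prod.fst_sum]
    · simp [Prod.snd_sum, Finset.sum_apply, Pi.single_apply]
  have hTsum : ∑ i, T ((0 : ℤ), Pi.single i (1 : ℤ)) =
      (((2 * (g : ℤ) + 1)), fun _ : Fin (2 * g + 1) => -(2 * (g : ℤ))) := by
    simp only [he]
    ext j
    · simp [Prod.fst_sum]
    · simp only [Prod.snd_sum, Finset.sum_apply]
      rw [Finset.sum_ite, Finset.sum_const, Finset.sum_const]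
      simp [Finset.filter_eq, Finset.filter_ne]
  rw [map_sub, map_smul, map_smul, map_sum, hh, hTsum, hsum]
  ext j <;> simp <;> ring
end

section
/- Let g ≥ 2. In ℝ^{2g+2} = ℝ × ℝ^{2g+1}, with coordinates (a, b₁, …, b_{2g+1}), the ℝ-linear span of the finite set of vectors { (g−1, −𝟙_I) : I ⊆ {1, …, 2g+1}, |I| = g } (where 𝟙_I denotes the indicator vector of I) is exactly the hyperplane { (a, b) : g·a + (g−1)·∑_{i=1}^{2g+1} b_i = 0 }. (These vectors are the numerical classes (g−1)·l − e_{i₁} − … − e_{i_g} of the degree g−1 rational normal curves through g of the 2g+1 blown-up points, the curves contracted by the map from the blow-up of ℙ^{2g−1} to the GIT quotient Σ_{2g−1}; the statement is the key step in computing that Σ_{2g−1} has Picard rank 1.) -/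
/-- **The span of the classes of contracted rational normal curves.**
Identify `N₁` of the blow-up of `ℙ^{2g-1}` at `2g+1` general points with
`ℝ × (Fin (2g+1) → ℝ)`, where `(a, b)` represents `a·l + ∑ bᵢ·eᵢ`.
For `g ≥ 2`, the `ℝ`-linear span of the classes
`(g-1, -𝟙_I)` for `I ⊆ {1, …, 2g+1}` with `|I| = g` (the classes
`(g-1)·l - e_{i₁} - … - e_{i_g}` of the contracted degree `g-1` rational
normal curves) is exactly the hyperplane
`{(a, b) | g·a + (g-1)·∑ bᵢ = 0}`. -/
theorem span_contracted_curve_classes (g : ℕ) (hg : 2 ≤ g) :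
    (Submodule.span ℝ
        {v : ℝ × (Fin (2 * g + 1) → ℝ) |
          ∃ I : Finset (Fin (2 * g + 1)), I.card = g ∧
            v = ((g : ℝ) - 1, fun i => if i ∈ I then -1 else 0)} :
      Set (ℝ × (Fin (2 * g + 1) → ℝ))) =
      {x : ℝ × (Fin (2 * g + 1) → ℝ) |
        (g : ℝ) * x.1 + ((g : ℝ) - 1) * ∑ i, x.2 i = 0} := by
  have hgR : (2:ℝ) ≤ (g:ℝ) := by exact_mod_cast hg
  have hg1 : (g : ℝ) - 1 ≠ 0 := by linarith
  have hind : ∀ I : Finset (Fin (2*g+1)),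
      ∑ i, (if i ∈ I then (-1:ℝ) else 0) = -(I.card : ℝ) := by
    intro I
    rw [Finset.sum_ite_mem, Finset.univ_inter, Finset.sum_const, nsmul_eq_mul]
    ring
  ext x
  constructor
  · -- span ⊆ hyperplane
    intro hx
    let K : Submodule ℝ (ℝ × (Fin (2*g+1) → ℝ)) :=
      { carrier := {x : ℝ × (Fin (2 * g + 1) → ℝ) |
          (g : ℝ) * x.1 + ((g : ℝ) - 1) * ∑ i, x.2 i = 0}
        add_mem' := by
          intro a b ha hb
          simp only [Set.mem_setOf_eq, Prod.fst_add, Prod.snd_add, Pi.add_apply,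
            Finset.sum_add_distrib] at *
          linarith
        zero_mem' := by simp
        smul_mem' := by
          intro c a ha
          simp only [Set.mem_setOf_eq, Prod.smul_fst, Prod.smul_snd, Pi.smul_apply,
            smul_eq_mul, ← Finset.mul_sum] at *
          linear_combination c * ha }
    have hle : Submodule.span ℝ
        {v : ℝ × (Fin (2 * g + 1) → ℝ) |
          ∃ I : Finset (Fin (2 * g + 1)), I.card = g ∧
            v = ((g : ℝ) - 1, fun i => if i ∈ I then -1 else 0)} ≤ K := by
      rw [Submodule.span_le]
      rintro v ⟨I, hI, rfl⟩
      show (g : ℝ) * ((g:ℝ)-1) + ((g : ℝ) - 1) * ∑ i, (if i ∈ I then (-1:ℝ) else 0) = 0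
      rw [hind I, hI]
      ring
    exact hle hx
  · intro hx
    simp only [Set.mem_setOf_eq] at hx
    -- the difference classes e_j - e_k lie in the span
    have hA : ∀ j k : Fin (2*g+1), j ≠ k →
        (((0:ℝ), fun i => if i = j then (1:ℝ) else if i = k then -1 else 0) :
            ℝ × (Fin (2*g+1) → ℝ)) ∈
          Submodule.span ℝ
            {v : ℝ × (Fin (2 * g + 1) → ℝ) |
              ∃ I : Finset (Fin (2 * g + 1)), I.card = g ∧
                v = ((g : ℝ) - 1, fun i => if i ∈ I then -1 else 0)} := by
      intro j k hjk
      have hcard : ((Finset.univ.erase j).erase k).card = 2*g - 1 := by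
        rw [Finset.card_erase_of_mem (Finset.mem_erase.mpr ⟨Ne.symm hjk, Finset.mem_univ k⟩),
          Finset.card_erase_of_mem (Finset.mem_univ j), Finset.card_univ, Fintype.card_fin]
        omega
      obtain ⟨t, ht, htc⟩ := Finset.exists_subset_card_eq (s := (Finset.univ.erase j).erase k) (n := g-1)
        (by rw [hcard]; omega)
      have hjt : j ∉ t := by
        intro h
        have := ht h
        simp [Finset.mem_erase] at this
      have hkt : k ∉ t := by
        intro h
        have := ht h
        simp [Finset.mem_erase] at this
      have h1 : (((g:ℝ)-1, fun i => if i ∈ insert k t then (-1:ℝ) else 0) :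
          ℝ × (Fin (2*g+1) → ℝ)) ∈ Submodule.span ℝ
            {v : ℝ × (Fin (2 * g + 1) → ℝ) |
              ∃ I : Finset (Fin (2 * g + 1)), I.card = g ∧
                v = ((g : ℝ) - 1, fun i => if i ∈ I then -1 else 0)} :=
        Submodule.subset_span ⟨insert k t,
          by rw [Finset.card_insert_of_notMem hkt, htc]; omega, rfl⟩
      have h2 : (((g:ℝ)-1, fun i => if i ∈ insert j t then (-1:ℝ) else 0) :
          ℝ × (Fin (2*g+1) → ℝ)) ∈ Submodule.span ℝ
            {v : ℝ × (Fin (2 * g + 1) → ℝ) |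
              ∃ I : Finset (Fin (2 * g + 1)), I.card = g ∧
                v = ((g : ℝ) - 1, fun i => if i ∈ I then -1 else 0)} :=
        Submodule.subset_span ⟨insert j t,
          by rw [Finset.card_insert_of_notMem hjt, htc]; omega, rfl⟩
      have heq : (((0:ℝ), fun i => if i = j then (1:ℝ) else if i = k then -1 else 0) :
          ℝ × (Fin (2*g+1) → ℝ)) =
          (((g:ℝ)-1, fun i => if i ∈ insert k t then (-1:ℝ) else 0) :
            ℝ × (Fin (2*g+1) → ℝ)) -
          (((g:ℝ)-1, fun i => if i ∈ insert j t then (-1:ℝ) else 0) :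
            ℝ × (Fin (2*g+1) → ℝ)) := by
        rw [Prod.ext_iff]
        constructor
        · simp
        · funext i
          simp only [Prod.snd_sub, Pi.sub_apply]
          by_cases hij : i = j
          · subst hij
            simp [Finset.mem_insert, hjk, hjt, hjk.symm]
          · by_cases hik : i = k
            · subst hik
              simp [Finset.mem_insert, Ne.symm hjk, hkt, hij]
            · simp [Finset.mem_insert, hij, hik]
      rw [heq]
      exact Submodule.sub_mem _ h1 h2
    -- vectors (0, b) with ∑ b = 0 lie in the span
    have hB : ∀ b : Fin (2*g+1) → ℝ, ∑ i, b i = 0 →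
        (((0:ℝ), b) : ℝ × (Fin (2*g+1) → ℝ)) ∈
          Submodule.span ℝ
            {v : ℝ × (Fin (2 * g + 1) → ℝ) |
              ∃ I : Finset (Fin (2 * g + 1)), I.card = g ∧
                v = ((g : ℝ) - 1, fun i => if i ∈ I then -1 else 0)} := by
      intro b hb
      have hpos : 0 < 2*g+1 := by omega
      set k₀ : Fin (2*g+1) := ⟨0, hpos⟩ with hk₀
      have key : (((0:ℝ), b) : ℝ × (Fin (2*g+1) → ℝ)) =
          ∑ j ∈ Finset.univ.erase k₀, b j •
            (((0:ℝ), fun i => if i = j then (1:ℝ) else if i = k₀ then -1 else 0) :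
              ℝ × (Fin (2*g+1) → ℝ)) := by
        rw [Prod.ext_iff]
        constructor
        · rw [Prod.fst_sum]
          simp
        · rw [Prod.snd_sum]
          funext i
          rw [Finset.sum_apply]
          simp only [Prod.smul_snd, Pi.smul_apply, smul_eq_mul]
          by_cases hik : i = k₀
          · have hcong : ∀ j ∈ Finset.univ.erase k₀, b j *
                (if i = j then (1:ℝ) else if i = k₀ then -1 else 0) = -(b j) := by
              intro j hj
              rw [if_neg (by rw [hik]; exact fun h => (Finset.ne_of_mem_erase hj) h.symm),
                if_pos hik]
              ring
            rw [Finset.sum_congr rfl hcong, Finset.sum_neg_distrib,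
              Finset.sum_erase_eq_sub (Finset.mem_univ k₀), hb, hik]
            ring
          · rw [Finset.sum_eq_single_of_mem i
              (Finset.mem_erase.mpr ⟨hik, Finset.mem_univ i⟩)]
            · simp
            · intro j hj hji
              rw [if_neg (fun h => hji h.symm), if_neg hik, mul_zero]
      rw [key]
      refine Submodule.sum_mem _ ?_
      intro j hj
      exact Submodule.smul_mem _ _ (hA j k₀ (Finset.ne_of_mem_erase hj))
    -- now the main argument
    obtain ⟨I₀, hI₀sub, hI₀⟩ := Finset.exists_subset_card_eq (s := (Finset.univ : Finset (Fin (2*g+1)))) (n := g)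
      (by rw [Finset.card_univ, Fintype.card_fin]; omega)
    have hv₀ : (((g:ℝ)-1, fun i => if i ∈ I₀ then (-1:ℝ) else 0) :
        ℝ × (Fin (2*g+1) → ℝ)) ∈ Submodule.span ℝ
          {v : ℝ × (Fin (2 * g + 1) → ℝ) |
            ∃ I : Finset (Fin (2 * g + 1)), I.card = g ∧
              v = ((g : ℝ) - 1, fun i => if i ∈ I then -1 else 0)} :=
      Submodule.subset_span ⟨I₀, hI₀, rfl⟩
    set c : ℝ := x.1 / ((g:ℝ)-1) with hc
    have hc' : c * ((g:ℝ)-1) = x.1 := div_mul_cancel₀ _ hg1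
    have hw : x - c • (((g:ℝ)-1, fun i => if i ∈ I₀ then (-1:ℝ) else 0) :
        ℝ × (Fin (2*g+1) → ℝ)) =
        ((0:ℝ), fun i => x.2 i - c * (if i ∈ I₀ then (-1:ℝ) else 0)) := by
      rw [Prod.ext_iff]
      constructor
      · simp only [Prod.fst_sub, Prod.smul_fst, smul_eq_mul]
        rw [hc']
        ring
      · funext i
        simp [Prod.snd_sub, Prod.smul_snd, Pi.sub_apply, Pi.smul_apply, smul_eq_mul]
    have hsum : ∑ i, (x.2 i - c * (if i ∈ I₀ then (-1:ℝ) else 0)) = 0 := by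
      rw [Finset.sum_sub_distrib, ← Finset.mul_sum, hind I₀, hI₀]
      have hkey : ((g:ℝ)-1) * (∑ i, x.2 i - c * (-(g:ℝ))) = 0 := by
        linear_combination hx + (g:ℝ) * hc'
      exact (mul_eq_zero.mp hkey).resolve_left hg1
    have hmem : x - c • (((g:ℝ)-1, fun i => if i ∈ I₀ then (-1:ℝ) else 0) :
        ℝ × (Fin (2*g+1) → ℝ)) ∈ Submodule.span ℝ
          {v : ℝ × (Fin (2 * g + 1) → ℝ) |
            ∃ I : Finset (Fin (2 * g + 1)), I.card = g ∧
              v = ((g : ℝ) - 1, fun i => if i ∈ I then -1 else 0)} := by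
      rw [hw]
      exact hB _ hsum
    have hfin := Submodule.add_mem _ (Submodule.smul_mem _ c hv₀) hmem
    have hxeq : c • (((g:ℝ)-1, fun i => if i ∈ I₀ then (-1:ℝ) else 0) :
        ℝ × (Fin (2*g+1) → ℝ)) +
        (x - c • (((g:ℝ)-1, fun i => if i ∈ I₀ then (-1:ℝ) else 0) :
          ℝ × (Fin (2*g+1) → ℝ))) = x := by
      abel
    rwa [hxeq] at hfin
end

section
/- Let g ≥ 1. Every element of V spans an extremal ray of the convex cone C generated by V in ℝ^{2g+3}; that is, for every v ∈ V, if v = u + w with u, w ∈ C, then u and w are nonnegative multiples of v. (These vectors are the classes of the 1-dimensional boundary strata L_I and L_{I^c} of the GIT quotient Σ_{2g} = (ℙ¹)^{2g+3} // PGL(2), and the statement is that each such class generates an extremal ray of the Mori cone NE(Σ_{2g}).) -/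
/-- The classes of the 1-dimensional boundary strata `L_I` and `L_{I^c}` of
the GIT quotient `Σ_{2g} = (ℙ¹)^{2g+3} // PGL(2)`, written in
`ℝ × (Fin (2g+2) → ℝ)` where `(a, b)` represents `a·l + ∑ bᵢ·eᵢ`:
the vectors `(g, -𝟙_I)` for `|I| = g+1` and `(1-g, 𝟙_J)` for `|J| = g`. -/
def boundaryClasses (g : ℕ) : Set (ℝ × (Fin (2 * g + 2) → ℝ)) :=
  {v | (∃ I : Finset (Fin (2 * g + 2)), I.card = g + 1 ∧
          v = ((g : ℝ), fun i => if i ∈ I then -1 else 0)) ∨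
       (∃ J : Finset (Fin (2 * g + 2)), J.card = g ∧
          v = (1 - (g : ℝ), fun i => if i ∈ J then 1 else 0))}

/-- The convex cone generated by `V`: all finite nonnegative real linear
combinations of elements of `V` (the Mori cone `NE(Σ_{2g})`). -/
def moriCone (g : ℕ) : Set (ℝ × (Fin (2 * g + 2) → ℝ)) :=
  {x | ∃ (m : ℕ) (c : Fin m → ℝ) (f : Fin m → ℝ × (Fin (2 * g + 2) → ℝ)),
    (∀ i, 0 ≤ c i) ∧ (∀ i, f i ∈ boundaryClasses g) ∧ x = ∑ i, c i • f i}

open Finset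

/-- The linear functional `(a, b) ↦ α a + ∑ cᵢ bᵢ`. -/
noncomputable def phiL (n : ℕ) (α : ℝ) (c : Fin n → ℝ) : (ℝ × (Fin n → ℝ)) →ₗ[ℝ] ℝ where
  toFun p := α * p.1 + ∑ i, c i * p.2 i
  map_add' p q := by
    simp only [Prod.fst_add, Prod.snd_add, Pi.add_apply, mul_add]
    rw [Finset.sum_add_distrib]; ring
  map_smul' r p := by
    simp only [Prod.smul_fst, Prod.smul_snd, smul_eq_mul, Pi.smul_apply, RingHom.id_apply]
    rw [mul_add, Finset.mul_sum]
    congr 1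
    · ring
    · exact Finset.sum_congr rfl fun i _ => by ring

lemma eval_formula (n : ℕ) (α X Y : ℝ) (I₀ I : Finset (Fin n)) (a x : ℝ) :
    phiL n α (fun i => if i ∈ I₀ then X else Y) (a, fun i => if i ∈ I then x else 0)
      = α * a + (((I ∩ I₀).card : ℝ) * X + ((I \ I₀).card : ℝ) * Y) * x := by
  simp only [phiL, LinearMap.coe_mk, AddHom.coe_mk]
  congr 1
  have h1 : ∀ i : Fin n, (if i ∈ I₀ then X else Y) * (if i ∈ I then x else 0)
      = if i ∈ I then (if i ∈ I₀ then X else Y) * x else 0 := by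
    intro i; by_cases h : i ∈ I <;> simp [h]
  rw [Finset.sum_congr rfl fun i _ => h1 i, Finset.sum_ite_mem, Finset.univ_inter,
    ← Finset.sum_mul]
  congr 1
  rw [Finset.sum_ite, Finset.sum_const, Finset.sum_const, Finset.filter_mem_eq_inter,
    ← Finset.sdiff_eq_filter, nsmul_eq_mul, nsmul_eq_mul]

/-- extraction lemma: if a nonneg functional vanishes on a cone element and `v` is the
only generator in its kernel, the element is a nonneg multiple of `v`. -/
lemma cone_extract (g : ℕ) (φ : (ℝ × (Fin (2 * g + 2) → ℝ)) →ₗ[ℝ] ℝ)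
    (v : ℝ × (Fin (2 * g + 2) → ℝ))
    (hpos : ∀ b ∈ boundaryClasses g, 0 ≤ φ b)
    (hker : ∀ b ∈ boundaryClasses g, φ b = 0 → b = v)
    (x : ℝ × (Fin (2 * g + 2) → ℝ)) (hx : x ∈ moriCone g) (hx0 : φ x = 0) :
    ∃ s : ℝ, 0 ≤ s ∧ x = s • v := by
  obtain ⟨m, c, f, hc, hf, rfl⟩ := hx
  rw [map_sum] at hx0
  simp only [map_smul, smul_eq_mul] at hx0
  have hterm : ∀ i ∈ Finset.univ (α := Fin m), c i * φ (f i) = 0 :=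
    (Finset.sum_eq_zero_iff_of_nonneg
      (fun i _ => mul_nonneg (hc i) (hpos _ (hf i)))).mp hx0
  refine ⟨∑ i, if f i = v then c i else 0,
    Finset.sum_nonneg fun i _ => by by_cases h : f i = v <;> simp [h, hc i], ?_⟩
  rw [Finset.sum_smul]
  refine Finset.sum_congr rfl fun i _ => ?_
  by_cases h : f i = v
  · simp [h]
  · have hc0 : c i = 0 := by
      rcases mul_eq_zero.mp (hterm i (Finset.mem_univ i)) with h0 | h0
      · exact h0
      · exact absurd (hker _ (hf i) h0) h
    simp [hc0]

lemma cone_nonneg (g : ℕ) (φ : (ℝ × (Fin (2 * g + 2) → ℝ)) →ₗ[ℝ] ℝ)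
    (hpos : ∀ b ∈ boundaryClasses g, 0 ≤ φ b)
    (x : ℝ × (Fin (2 * g + 2) → ℝ)) (hx : x ∈ moriCone g) : 0 ≤ φ x := by
  obtain ⟨m, c, f, hc, hf, rfl⟩ := hx
  rw [map_sum]
  exact Finset.sum_nonneg fun i _ => by
    rw [map_smul, smul_eq_mul]; exact mul_nonneg (hc i) (hpos _ (hf i))

lemma extremal_of_functional (g : ℕ) (v u w : ℝ × (Fin (2 * g + 2) → ℝ))
    (hu : u ∈ moriCone g) (hw : w ∈ moriCone g) (huw : v = u + w)
    (φ : (ℝ × (Fin (2 * g + 2) → ℝ)) →ₗ[ℝ] ℝ)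
    (hpos : ∀ b ∈ boundaryClasses g, 0 ≤ φ b)
    (hker : ∀ b ∈ boundaryClasses g, φ b = 0 → b = v)
    (hv0 : φ v = 0) :
    (∃ s : ℝ, 0 ≤ s ∧ u = s • v) ∧ (∃ t : ℝ, 0 ≤ t ∧ w = t • v) := by
  have hsum : φ u + φ w = 0 := by rw [← map_add, ← huw, hv0]
  have hu' := cone_nonneg g φ hpos u hu
  have hw' := cone_nonneg g φ hpos w hw
  have hu0 : φ u = 0 := by linarith
  have hw0 : φ w = 0 := by linarith
  exact ⟨cone_extract g φ v hpos hker u hu hu0, cone_extract g φ v hpos hker w hw hw0⟩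

lemma card_sdiff_real (n : ℕ) (I I₀ : Finset (Fin n)) :
    ((I \ I₀).card : ℝ) = (I.card : ℝ) - ((I ∩ I₀).card : ℝ) := by
  have := Finset.card_sdiff_add_card_inter I I₀
  have : ((I \ I₀).card : ℝ) + ((I ∩ I₀).card : ℝ) = (I.card : ℝ) := by
    exact_mod_cast congrArg (Nat.cast : ℕ → ℝ) this
  linarith

/-- **Each boundary class spans an extremal ray of the Mori cone.**
For `g ≥ 1`, every `v ∈ V` spans an extremal ray of the convex cone `C`
generated by `V`: if `v = u + w` with `u, w ∈ C`, then `u` and `w` are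
nonnegative multiples of `v`. -/
theorem boundaryClasses_extremal (g : ℕ) (hg : 1 ≤ g)
    (v : ℝ × (Fin (2 * g + 2) → ℝ)) (hv : v ∈ boundaryClasses g)
    (u w : ℝ × (Fin (2 * g + 2) → ℝ)) (hu : u ∈ moriCone g)
    (hw : w ∈ moriCone g) (huw : v = u + w) :
    (∃ s : ℝ, 0 ≤ s ∧ u = s • v) ∧ (∃ t : ℝ, 0 ≤ t ∧ w = t • v) := by
  have hg1 : (1 : ℝ) ≤ (g : ℝ) := by exact_mod_cast hg
  simp only [boundaryClasses, Set.mem_setOf_eq] at hv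
  rcases hv with ⟨I₀, hI₀, rfl⟩ | ⟨J₀, hJ₀, rfl⟩
  · -- case v = (g, -𝟙_{I₀}),  φ = phiL with α = 2g(g+1), c = 2g² on I₀, 2g²-1 off
    set φ := phiL (2 * g + 2) (2 * g * ((g : ℝ) + 1))
      (fun i => if i ∈ I₀ then 2 * (g : ℝ) ^ 2 else 2 * (g : ℝ) ^ 2 - 1) with hφ
    have hevalI : ∀ I : Finset (Fin (2 * g + 2)), I.card = g + 1 →
        φ ((g : ℝ), fun i => if i ∈ I then -1 else 0)
          = ((g : ℝ) + 1) - ((I ∩ I₀).card : ℝ) := by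
      intro I hI
      rw [hφ, eval_formula, card_sdiff_real, hI]
      push_cast
      ring
    have hevalJ : ∀ J : Finset (Fin (2 * g + 2)), J.card = g →
        φ (1 - (g : ℝ), fun i => if i ∈ J then 1 else 0)
          = (g : ℝ) + ((J ∩ I₀).card : ℝ) := by
      intro J hJ
      rw [hφ, eval_formula, card_sdiff_real, hJ]
      ring
    refine extremal_of_functional g _ u w hu hw huw φ ?_ ?_ ?_
    · rintro b (⟨I, hI, rfl⟩ | ⟨J, hJ, rfl⟩)
      · rw [hevalI I hI]
        have : ((I ∩ I₀).card : ℝ) ≤ (g : ℝ) + 1 := by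
          have := Finset.card_le_card (Finset.inter_subset_left (s₁ := I) (s₂ := I₀))
          rw [hI] at this
          exact_mod_cast this
        linarith
      · rw [hevalJ J hJ]
        positivity
    · rintro b (⟨I, hI, rfl⟩ | ⟨J, hJ, rfl⟩) hb0
      · rw [hevalI I hI] at hb0
        have hkr : ((I ∩ I₀).card : ℝ) = (g : ℝ) + 1 := by linarith
        have hk : (I ∩ I₀).card = g + 1 := by exact_mod_cast hkr
        have h1 : I ∩ I₀ = I := Finset.eq_of_subset_of_card_le
          (Finset.inter_subset_left) (by rw [hI, hk])
        have h2 : I ⊆ I₀ := by rw [← h1]; exact Finset.inter_subset_right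
        have h3 : I = I₀ := Finset.eq_of_subset_of_card_le h2 (by rw [hI, hI₀])
        rw [h3]
      · rw [hevalJ J hJ] at hb0
        have : (0:ℝ) ≤ ((J ∩ I₀).card : ℝ) := by positivity
        linarith
    · rw [hevalI I₀ hI₀, Finset.inter_self, hI₀]
      push_cast
      ring
  · -- case v = (1-g, 𝟙_{J₀}),  φ with α = g(g+1)(2g²+1), c = (g²-1)(2g²+1) on J₀, 2g⁴ off
    set φ := phiL (2 * g + 2) ((g : ℝ) * ((g : ℝ) + 1) * (2 * (g : ℝ) ^ 2 + 1))
      (fun i => if i ∈ J₀ then ((g : ℝ) ^ 2 - 1) * (2 * (g : ℝ) ^ 2 + 1)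
        else 2 * (g : ℝ) ^ 4) with hφ
    have hevalI : ∀ I : Finset (Fin (2 * g + 2)), I.card = g + 1 →
        φ ((g : ℝ), fun i => if i ∈ I then -1 else 0)
          = ((g : ℝ) + 1) * (g : ℝ) ^ 2 + ((I ∩ J₀).card : ℝ) * ((g : ℝ) ^ 2 + 1) := by
      intro I hI
      rw [hφ, eval_formula, card_sdiff_real, hI]
      push_cast
      ring
    have hevalJ : ∀ J : Finset (Fin (2 * g + 2)), J.card = g →
        φ (1 - (g : ℝ), fun i => if i ∈ J then 1 else 0)
          = ((g : ℝ) - ((J ∩ J₀).card : ℝ)) * ((g : ℝ) ^ 2 + 1) := by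
      intro J hJ
      rw [hφ, eval_formula, card_sdiff_real, hJ]
      ring
    refine extremal_of_functional g _ u w hu hw huw φ ?_ ?_ ?_
    · rintro b (⟨I, hI, rfl⟩ | ⟨J, hJ, rfl⟩)
      · rw [hevalI I hI]
        positivity
      · rw [hevalJ J hJ]
        have : ((J ∩ J₀).card : ℝ) ≤ (g : ℝ) := by
          have := Finset.card_le_card (Finset.inter_subset_left (s₁ := J) (s₂ := J₀))
          rw [hJ] at this
          exact_mod_cast this
        nlinarith [sq_nonneg (g : ℝ)]
    · rintro b (⟨I, hI, rfl⟩ | ⟨J, hJ, rfl⟩) hb0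
      · rw [hevalI I hI] at hb0
        have h1 : (0:ℝ) ≤ ((I ∩ J₀).card : ℝ) := by positivity
        nlinarith
      · rw [hevalJ J hJ] at hb0
        have hgm : ((J ∩ J₀).card : ℝ) = (g : ℝ) := by
          rcases mul_eq_zero.mp hb0 with h | h
          · linarith
          · nlinarith
        have hk : (J ∩ J₀).card = g := by exact_mod_cast hgm
        have h1 : J ∩ J₀ = J := Finset.eq_of_subset_of_card_le
          (Finset.inter_subset_left) (by rw [hJ, hk])
        have h2 : J ⊆ J₀ := by rw [← h1]; exact Finset.inter_subset_right
        have h3 : J = J₀ := Finset.eq_of_subset_of_card_le h2 (by rw [hJ, hJ₀])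
        rw [h3]
    · rw [hevalJ J₀ hJ₀, Finset.inter_self, hJ₀]
      ring
end

section
/- Let g ≥ 2. Let R be the set of g-element subsets of {1, …, 2g} and S the set of (g−2)-element subsets of {1, …, 2g}. Let W ⊆ (R → ℚ) be the ℚ-subspace of families (a_I)_{I ∈ R} satisfying, for every J ∈ S, the linear condition ∑_{I ∈ R, J ⊆ I} a_I = 0. Then the dimension of W equals binom(2g, g) − binom(2g, g−2). (By Kumar's description, W is the space of sections H⁰(ℙ^{2g−1}, L_{2g−1}) of the linear system of degree-g hypersurfaces in ℙ^{2g−1} with multiplicity g−1 at 2g+1 general points, written as ∑_{I∈R} a_I x_I with x_I the square-free monomial ∏_{i∈I} x_i; so this computes h⁰(ℙ^{2g−1}, L_{2g−1}), the dimension of the ambient projective space of the GIT quotient Σ_{2g−1}.) -/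
open Finset

namespace KumarAux

variable {α : Type*} [Fintype α] [DecidableEq α]

/-- Up operator on the subset lattice. -/
def Uop (f : Finset α → ℚ) : Finset α → ℚ := fun B => ∑ b ∈ B, f (B.erase b)

/-- Down operator on the subset lattice. -/
def Dop (f : Finset α → ℚ) : Finset α → ℚ := fun A => ∑ a ∈ Aᶜ, f (insert a A)

lemma adj (f h : Finset α → ℚ) :
    ∑ B : Finset α, Uop f B * h B = ∑ A : Finset α, f A * Dop h A := by
  simp only [Uop, Dop, sum_mul, mul_sum]
  rw [Finset.sum_sigma' (univ : Finset (Finset α)) (fun B => B)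
      (fun x y => f (Finset.erase x y) * h x),
    Finset.sum_sigma' (univ : Finset (Finset α)) (fun A => Aᶜ)
      (fun x y => f x * h (insert y x))]
  refine Finset.sum_nbij' (fun x => ⟨x.1.erase x.2, x.2⟩) (fun x => ⟨insert x.2 x.1, x.2⟩)
    ?_ ?_ ?_ ?_ ?_
  · rintro ⟨B, b⟩ hx
    simp only [mem_sigma, mem_univ, true_and] at hx ⊢
    simp [hx]
  · rintro ⟨A, a⟩ hx
    simp only [mem_sigma, mem_univ, true_and, mem_compl] at hx ⊢
    simp
  · rintro ⟨B, b⟩ hx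
    simp only [mem_sigma, mem_univ, true_and] at hx
    simp [Finset.insert_erase hx]
  · rintro ⟨A, a⟩ hx
    simp only [mem_sigma, mem_univ, true_and, mem_compl] at hx
    simp [Finset.erase_insert hx]
  · rintro ⟨B, b⟩ hx
    simp only [mem_sigma, mem_univ, true_and] at hx
    simp [Finset.insert_erase hx]

lemma comm_DU (f : Finset α → ℚ) (A : Finset α) :
    Dop (Uop f) A = Uop (Dop f) A + ((Fintype.card α : ℚ) - 2 * A.card) * f A := by
  have h1 : Dop (Uop f) A
      = (Aᶜ.card : ℚ) * f A + ∑ a ∈ Aᶜ, ∑ b ∈ A, f (insert a (A.erase b)) := by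
    have step : ∀ a ∈ Aᶜ, (∑ b ∈ insert a A, f ((insert a A).erase b))
        = f A + ∑ b ∈ A, f (insert a (A.erase b)) := by
      intro a ha
      have ha' : a ∉ A := mem_compl.1 ha
      rw [sum_insert ha', erase_insert ha']
      congr 1
      refine sum_congr rfl fun b hb => ?_
      rw [erase_insert_of_ne (fun hab => ha' (by rw [hab]; exact hb))]
    unfold Dop Uop
    rw [sum_congr rfl step, Finset.sum_add_distrib, sum_const, nsmul_eq_mul]
  have h2 : Uop (Dop f) A
      = (A.card : ℚ) * f A + ∑ b ∈ A, ∑ a ∈ Aᶜ, f (insert a (A.erase b)) := by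
    have step : ∀ b ∈ A, (∑ a ∈ (A.erase b)ᶜ, f (insert a (A.erase b)))
        = f A + ∑ a ∈ Aᶜ, f (insert a (A.erase b)) := by
      intro b hb
      rw [compl_erase, sum_insert (by simp [hb]), insert_erase hb]
    unfold Uop Dop
    rw [sum_congr rfl step, Finset.sum_add_distrib, sum_const, nsmul_eq_mul]
  rw [h1, h2, Finset.sum_comm, card_compl,
    Nat.cast_sub (by simpa using card_le_univ A)]
  ring

lemma Uop_eq_zero (f : Finset α → ℚ)
    (hsupp : ∀ A : Finset α, f A ≠ 0 → 2 * A.card < Fintype.card α)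
    (hU : Uop f = 0) : f = 0 := by
  have key : (0 : ℚ) = (∑ A : Finset α, Dop f A * Dop f A)
      + ∑ A : Finset α, ((Fintype.card α : ℚ) - 2 * A.card) * (f A * f A) := by
    calc (0 : ℚ) = ∑ A : Finset α, Dop (Uop f) A * f A := by
          simp [hU, Dop]
      _ = ∑ A : Finset α,
            (Uop (Dop f) A * f A + ((Fintype.card α : ℚ) - 2 * A.card) * (f A * f A)) := by
          refine sum_congr rfl fun A _ => ?_
          rw [comm_DU]; ring
      _ = (∑ A : Finset α, Uop (Dop f) A * f A)
          + ∑ A : Finset α, ((Fintype.card α : ℚ) - 2 * A.card) * (f A * f A) := by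
          rw [Finset.sum_add_distrib]
      _ = _ := by rw [adj (Dop f) f]
  have hterm : ∀ A : Finset α,
      0 ≤ ((Fintype.card α : ℚ) - 2 * A.card) * (f A * f A) := by
    intro A
    by_cases hA : f A = 0
    · simp [hA]
    · have h1 : (0 : ℚ) < (Fintype.card α : ℚ) - 2 * A.card := by
        have := hsupp A hA
        have : (2 * A.card : ℚ) < (Fintype.card α : ℚ) := by exact_mod_cast this
        push_cast at this ⊢
        linarith
      exact le_of_lt (mul_pos h1 (mul_self_pos.2 hA))
  have hsq : 0 ≤ ∑ A : Finset α, Dop f A * Dop f A :=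
    Finset.sum_nonneg fun A _ => mul_self_nonneg _
  have hS2 : ∑ A : Finset α, ((Fintype.card α : ℚ) - 2 * A.card) * (f A * f A) = 0 := by
    have h2 : 0 ≤ ∑ A : Finset α, ((Fintype.card α : ℚ) - 2 * A.card) * (f A * f A) :=
      Finset.sum_nonneg fun A _ => hterm A
    linarith
  have hz := (Finset.sum_eq_zero_iff_of_nonneg (fun A _ => hterm A)).1 hS2
  funext A
  by_contra hA
  have h1 : (0 : ℚ) < (Fintype.card α : ℚ) - 2 * A.card := by
    have := hsupp A hA
    have : (2 * A.card : ℚ) < (Fintype.card α : ℚ) := by exact_mod_cast this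
    linarith
  have h2 : (0 : ℚ) < f A * f A := mul_self_pos.2 hA
  have := hz A (mem_univ A)
  nlinarith

lemma sum_erase_powersetCard (B : Finset α) (k : ℕ) (hB : B.card = k + 1)
    (f : Finset α → ℚ) :
    ∑ c ∈ B, f (B.erase c) = ∑ J ∈ B.powersetCard k, f J := by
  refine Finset.sum_bij (fun c _ => B.erase c) ?_ ?_ ?_ ?_
  · intro c hc
    rw [mem_powersetCard]
    exact ⟨erase_subset _ _, by rw [card_erase_of_mem hc, hB]; omega⟩
  · intro c hc c' hc' h
    by_contra hne
    have : c ∈ B.erase c' := mem_erase.2 ⟨hne, hc⟩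
    rw [← h] at this
    exact (notMem_erase c B) this
  · intro J hJ
    obtain ⟨hsub, hcard⟩ := mem_powersetCard.1 hJ
    have h1 : (B \ J).card = 1 := by rw [card_sdiff_of_subset hsub, hB, hcard]; omega
    obtain ⟨c, hc⟩ := Finset.card_eq_one.1 h1
    have hcBJ : c ∈ B \ J := hc ▸ mem_singleton_self c
    have hcB : c ∈ B := (mem_sdiff.1 hcBJ).1
    have hcJ : c ∉ J := (mem_sdiff.1 hcBJ).2
    refine ⟨c, hcB, ?_⟩
    apply Finset.Subset.antisymm
    · intro x hx
      obtain ⟨hxc, hxB⟩ := mem_erase.1 hx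
      by_contra hxJ
      have : x ∈ B \ J := mem_sdiff.2 ⟨hxB, hxJ⟩
      rw [hc, mem_singleton] at this
      exact hxc this
    · intro x hx
      exact mem_erase.2 ⟨fun h => hcJ (h ▸ hx), hsub hx⟩
  · intro c hc; rfl

lemma doublecount (A : Finset α) (k : ℕ) (f : Finset α → ℚ) :
    ∑ b ∈ A, ∑ J ∈ (A.erase b).powersetCard k, f J
      = ∑ J ∈ A.powersetCard k, ((A \ J).card : ℚ) * f J := by
  have h1 : ∀ b : α, (A.erase b).powersetCard k
      = (A.powersetCard k).filter (fun J => b ∉ J) := by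
    intro b; ext J
    simp only [mem_powersetCard, mem_filter, subset_erase]
    tauto
  simp only [h1, sum_filter]
  rw [Finset.sum_comm]
  refine sum_congr rfl fun J hJ => ?_
  rw [← sum_filter, sum_const, ← Finset.sdiff_eq_filter, nsmul_eq_mul]

end KumarAux

namespace KumarAux

lemma key_inj (g : ℕ) (hg : 2 ≤ g) (F : Finset (Fin (2 * g)) → ℚ)
    (hFsupp : ∀ A, F A ≠ 0 → A.card = g - 2)
    (h0 : ∀ A : Finset (Fin (2 * g)), A.card = g →
      (∑ J ∈ A.powersetCard (g - 2), F J) = 0) :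
    F = 0 := by
  have hcard : Fintype.card (Fin (2 * g)) = 2 * g := Fintype.card_fin _
  have hUU : Uop (Uop F) = 0 := by
    funext A
    show ∑ b ∈ A, ∑ c ∈ A.erase b, F ((A.erase b).erase c) = 0
    by_cases hA : A.card = g
    · have step : ∀ b ∈ A, ∑ c ∈ A.erase b, F ((A.erase b).erase c)
          = ∑ J ∈ (A.erase b).powersetCard (g - 2), F J := by
        intro b hb
        exact sum_erase_powersetCard _ _ (by rw [card_erase_of_mem hb, hA]; omega) F
      rw [sum_congr rfl step, doublecount]
      have step2 : ∀ J ∈ A.powersetCard (g - 2), ((A \ J).card : ℚ) * F J = 2 * F J := by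
        intro J hJ
        obtain ⟨hsub, hc⟩ := mem_powersetCard.1 hJ
        rw [card_sdiff_of_subset hsub, hA, hc, show g - (g - 2) = 2 by omega]
        norm_num
      rw [sum_congr rfl step2, ← mul_sum, h0 A hA, mul_zero]
    · refine sum_eq_zero fun b hb => sum_eq_zero fun c hc => ?_
      by_contra hne
      have h1 := hFsupp _ hne
      have h3 : (A.erase b).card = A.card - 1 := card_erase_of_mem hb
      have h4 : ((A.erase b).erase c).card = (A.erase b).card - 1 := card_erase_of_mem hc
      have h5 : 1 ≤ (A.erase b).card := card_pos.2 ⟨c, hc⟩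
      have h6 : 1 ≤ A.card := card_pos.2 ⟨b, hb⟩
      omega
  have hUFsupp : ∀ B, Uop F B ≠ 0 → 2 * B.card < Fintype.card (Fin (2 * g)) := by
    intro B hB
    rw [hcard]
    have hB' : ∑ c ∈ B, F (B.erase c) ≠ 0 := hB
    obtain ⟨c, hc, hFc⟩ := Finset.exists_ne_zero_of_sum_ne_zero hB'
    have h1 := hFsupp _ hFc
    have h2 := card_erase_of_mem hc
    have h3 : 1 ≤ B.card := card_pos.2 ⟨c, hc⟩
    omega
  have hUF : Uop F = 0 := Uop_eq_zero _ hUFsupp hUU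
  refine Uop_eq_zero _ (fun A hA => ?_) hUF
  rw [hcard]
  have := hFsupp A hA
  omega

end KumarAux

open KumarAux in
/-- **Dimension of Kumar's space of sections.**
Let `R` be the set of `g`-element subsets of `{1, …, 2g}` and `S` the set of
`(g-2)`-element subsets.  Let `W ⊆ (R → ℚ)` be the subspace of families
`(a_I)` satisfying `∑_{I ⊇ J} a_I = 0` for every `J ∈ S`.  Then
`dim W = binom(2g, g) - binom(2g, g-2)`.  (By Kumar's description, `W` is
`H⁰(ℙ^{2g-1}, L_{2g-1})`, the space of sections of the linear system of
degree-`g` hypersurfaces with multiplicity `g-1` at `2g+1` general points.) -/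
theorem kumar_sections_dim (g : ℕ) (hg : 2 ≤ g) :
    Module.finrank ℚ
      ↥(⨅ J : {J : Finset (Fin (2 * g)) // J.card = g - 2},
          LinearMap.ker
            (∑ I ∈ Finset.univ.filter
                (fun I : {I : Finset (Fin (2 * g)) // I.card = g} =>
                  J.1 ⊆ I.1),
              (LinearMap.proj I :
                ({I : Finset (Fin (2 * g)) // I.card = g} → ℚ) →ₗ[ℚ] ℚ))) =
      Nat.choose (2 * g) g - Nat.choose (2 * g) (g - 2) := by
  classical
  set M : Matrix {J : Finset (Fin (2 * g)) // J.card = g - 2}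
      {I : Finset (Fin (2 * g)) // I.card = g} ℚ :=
    fun J I => if J.1 ⊆ I.1 then 1 else 0 with hM
  have hmv : ∀ (a : {I : Finset (Fin (2 * g)) // I.card = g} → ℚ)
      (J : {J : Finset (Fin (2 * g)) // J.card = g - 2}),
      M.mulVec a J = ∑ I ∈ Finset.univ.filter
        (fun I : {I : Finset (Fin (2 * g)) // I.card = g} => J.1 ⊆ I.1), a I := by
    intro a J
    simp [Matrix.mulVec, dotProduct, hM, ite_mul, sum_filter]
  have hker : (⨅ J : {J : Finset (Fin (2 * g)) // J.card = g - 2},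
      LinearMap.ker
        (∑ I ∈ Finset.univ.filter
            (fun I : {I : Finset (Fin (2 * g)) // I.card = g} => J.1 ⊆ I.1),
          (LinearMap.proj I :
            ({I : Finset (Fin (2 * g)) // I.card = g} → ℚ) →ₗ[ℚ] ℚ)))
      = LinearMap.ker M.mulVecLin := by
    ext a
    simp only [Submodule.mem_iInf, LinearMap.mem_ker, LinearMap.sum_apply,
      LinearMap.proj_apply, Matrix.mulVecLin_apply]
    rw [funext_iff]
    refine forall_congr' fun J => ?_
    rw [hmv a J, Pi.zero_apply]
  have hinj : Function.Injective (M.transpose.mulVecLin) := by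
    rw [← LinearMap.ker_eq_bot, LinearMap.ker_eq_bot']
    intro b hb
    set F : Finset (Fin (2 * g)) → ℚ :=
      fun A => if h : A.card = g - 2 then b ⟨A, h⟩ else 0 with hFdef
    have hFsupp : ∀ A, F A ≠ 0 → A.card = g - 2 := by
      intro A hA
      by_contra h
      exact hA (dif_neg h)
    have h0 : ∀ A : Finset (Fin (2 * g)), A.card = g →
        (∑ J ∈ A.powersetCard (g - 2), F J) = 0 := by
      intro A hA
      have h1 : M.transpose.mulVec b ⟨A, hA⟩ = 0 := congrFun hb ⟨A, hA⟩
      have h2 : ∑ J ∈ A.powersetCard (g - 2), F J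
          = ∑ J ∈ (Finset.univ : Finset {J : Finset (Fin (2 * g)) // J.card = g - 2}).filter
              (fun J => J.1 ⊆ A), b J := by
        refine Finset.sum_bij (fun J hJ => ⟨J, (mem_powersetCard.1 hJ).2⟩) ?_ ?_ ?_ ?_
        · intro J hJ
          simp [mem_filter, (mem_powersetCard.1 hJ).1]
        · intro J hJ J' hJ' h
          simpa using congrArg Subtype.val h
        · intro J' hJ'
          exact ⟨J'.1, mem_powersetCard.2 ⟨(mem_filter.1 hJ').2, J'.2⟩, rfl⟩
        · intro J hJ
          exact dif_pos (mem_powersetCard.1 hJ).2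
      have h1' : M.transpose.mulVec b ⟨A, hA⟩
          = ∑ J : {J : Finset (Fin (2 * g)) // J.card = g - 2},
              if J.1 ⊆ A then b J else 0 := by
        simp [Matrix.mulVec, dotProduct, Matrix.transpose_apply, Matrix.transpose, Matrix.of_apply, hM, ite_mul]
      calc ∑ J ∈ A.powersetCard (g - 2), F J
          = ∑ J ∈ (Finset.univ : Finset {J : Finset (Fin (2 * g)) // J.card = g - 2}).filter
              (fun J => J.1 ⊆ A), b J := h2
        _ = ∑ J : {J : Finset (Fin (2 * g)) // J.card = g - 2},
              if J.1 ⊆ A then b J else 0 := sum_filter _ _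
        _ = M.transpose.mulVec b ⟨A, hA⟩ := h1'.symm
        _ = 0 := h1
    have hF := key_inj g hg F hFsupp h0
    funext J
    have h3 : F J.1 = 0 := congrFun hF J.1
    have h4 : F J.1 = b J := by
      rw [hFdef]
      exact dif_pos J.2
    rw [← h4, h3]
    rfl
  rw [hker]
  have hrn := LinearMap.finrank_range_add_finrank_ker M.mulVecLin
  have hdom : Module.finrank ℚ ({I : Finset (Fin (2 * g)) // I.card = g} → ℚ)
      = Nat.choose (2 * g) g := by
    rw [Module.finrank_fintype_fun_eq_card]
    simp
  have hrange : Module.finrank ℚ ↥(LinearMap.range M.mulVecLin)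
      = Nat.choose (2 * g) (g - 2) := by
    have h1 : M.rank = M.transpose.rank := (Matrix.rank_transpose M).symm
    have h2 : M.transpose.rank
        = Module.finrank ℚ ({J : Finset (Fin (2 * g)) // J.card = g - 2} → ℚ) :=
      LinearMap.finrank_range_of_inj hinj
    have h3 : Module.finrank ℚ ({J : Finset (Fin (2 * g)) // J.card = g - 2} → ℚ)
        = Nat.choose (2 * g) (g - 2) := by
      rw [Module.finrank_fintype_fun_eq_card]
      simp
    have h4 : Module.finrank ℚ ↥(LinearMap.range M.mulVecLin) = M.rank := rfl
    rw [h4, h1, h2, h3]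
  rw [hdom, hrange] at hrn
  omega
end

section
/- For every integer g ≥ 2 the following identity of integers holds: binom(3g−1, 2g−1) + ∑_{r=0}^{g−2} (−1)^{r+1} · binom(2g+1, r+1) · binom(3g−2r−3, 2g−1) = binom(2g, g) − binom(2g, g−2). (The left-hand side is the value h_{Σ_{2g−1}}(1) of the Hilbert polynomial of the GIT quotient Σ_{2g−1} ⊂ ℙᴺ in its natural embedding, i.e. h⁰(ℙ^{2g−1}, L_{2g−1}) as computed from the linear virtual dimension; the right-hand side is Kumar's count of the same dimension.) -/
open Finset PowerSeries

private lemma coeffPS_one_add_X_pow (n m : ℕ) :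
    (PowerSeries.coeff (R := ℤ) m) ((1 + PowerSeries.X) ^ n) = (n.choose m : ℤ) := by
  have h : (((1 + Polynomial.X : Polynomial ℤ) : PowerSeries ℤ)) = 1 + PowerSeries.X := by
    simp
  rw [← h, ← Polynomial.coe_pow, Polynomial.coeff_coe, Polynomial.coeff_one_add_X_pow]

private lemma key_sieve (n m : ℕ) (hn : 2 ≤ n) (hm : m ≤ n) :
    ∑ s ∈ range (m + 1),
        (-1 : ℤ) ^ s * (n.choose s : ℤ) * ((n + m - 2 * s - 1).choose (n - 1) : ℤ) =
      (n.choose m : ℤ) := by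
  have hzero : ∀ s : ℕ, m < 2 * s →
      ((n + m - 2 * s - 1).choose (n - 1) : ℤ) = 0 := by
    intro s hs
    have : (n + m - 2 * s - 1).choose (n - 1) = 0 :=
      Nat.choose_eq_zero_of_lt (by omega)
    rw [this]; norm_num
  -- power series identity
  have hps : ((1 - PowerSeries.X ^ 2 : PowerSeries ℤ) ^ n) * (invOneSubPow ℤ n).val
      = (1 + PowerSeries.X) ^ n := by
    have h1 : ((1 + PowerSeries.X) ^ n : PowerSeries ℤ) * (invOneSubPow ℤ n).inv
        = (1 - PowerSeries.X ^ 2) ^ n := by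
      rw [invOneSubPow_inv_eq_one_sub_pow, ← mul_pow]
      ring_nf
    calc (1 - PowerSeries.X ^ 2 : PowerSeries ℤ) ^ n * (invOneSubPow ℤ n).val
        = (1 + PowerSeries.X) ^ n *
            ((invOneSubPow ℤ n).inv * (invOneSubPow ℤ n).val) := by
          rw [← mul_assoc, h1]
      _ = (1 + PowerSeries.X) ^ n := by rw [(invOneSubPow ℤ n).inv_val, mul_one]
  have hexp : (1 - PowerSeries.X ^ 2 : PowerSeries ℤ) ^ n
      = ∑ k ∈ range (n + 1),
          ((-1 : ℤ) ^ k * (n.choose k : ℤ)) • (PowerSeries.X ^ (2 * k)) := by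
    have h2 : (1 - PowerSeries.X ^ 2 : PowerSeries ℤ) = -PowerSeries.X ^ 2 + 1 := by ring
    rw [h2, add_pow]
    refine Finset.sum_congr rfl fun k _ => ?_
    rw [one_pow, neg_pow, pow_mul, mul_one]
    rw [zsmul_eq_mul]
    push_cast
    ring
  have hc := congrArg (PowerSeries.coeff (R := ℤ) m) hps
  rw [hexp, Finset.sum_mul, map_sum, coeffPS_one_add_X_pow] at hc
  have hval : (invOneSubPow ℤ n).val
      = (PowerSeries.mk fun k => ((n - 1 + k).choose (n - 1) : ℤ)) :=
    invOneSubPow_val_eq_mk_sub_one_add_choose_of_pos ℤ n (by omega)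
  have hterm : ∀ k ∈ range (n + 1),
      (PowerSeries.coeff (R := ℤ) m)
          ((((-1 : ℤ) ^ k * (n.choose k : ℤ)) • PowerSeries.X ^ (2 * k)) *
            (invOneSubPow ℤ n).val)
        = (-1 : ℤ) ^ k * (n.choose k : ℤ) *
            ((n + m - 2 * k - 1).choose (n - 1) : ℤ) := by
    intro k _
    rw [smul_mul_assoc, map_smul, smul_eq_mul]
    congr 1
    rw [coeff_X_pow_mul', hval]
    by_cases h : 2 * k ≤ m
    · rw [if_pos h, PowerSeries.coeff_mk]
      congr 2
      omega
    · rw [if_neg h, hzero k (by omega)]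
  rw [Finset.sum_congr rfl hterm] at hc
  -- now hc : ∑ k in range (n+1), ... = (n.choose m : ℤ)
  rw [← hc]
  refine Finset.sum_subset ?_ ?_
  · exact Finset.range_subset_range.2 (by omega)
  · intro x hx hnx
    simp only [Finset.mem_range] at hx hnx
    rw [hzero x (by omega), mul_zero]

/-- **Two computations of `h⁰(ℙ^{2g-1}, L_{2g-1})` agree.**
For every integer `g ≥ 2`,
`binom(3g-1, 2g-1) + ∑_{r=0}^{g-2} (-1)^{r+1}·binom(2g+1, r+1)·binom(3g-2r-3, 2g-1)
  = binom(2g, g) - binom(2g, g-2)`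
as integers.  The left-hand side is the value `h_{Σ_{2g-1}}(1)` of the
Hilbert polynomial of the GIT quotient `Σ_{2g-1} ⊂ ℙᴺ`; the right-hand side
is Kumar's count of the same dimension. -/
theorem hilbert_value_eq_kumar_count (g : ℕ) (hg : 2 ≤ g) :
    (Nat.choose (3 * g - 1) (2 * g - 1) : ℤ) +
        ∑ r ∈ Finset.range (g - 1),
          (-1 : ℤ) ^ (r + 1) * (Nat.choose (2 * g + 1) (r + 1) : ℤ) *
            (Nat.choose (3 * g - 2 * r - 3) (2 * g - 1) : ℤ) =
      (Nat.choose (2 * g) g : ℤ) - (Nat.choose (2 * g) (g - 2) : ℤ) := by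
  have keyA := key_sieve (2 * g) g (by omega) (by omega)
  have keyB := key_sieve (2 * g) (g - 2) (by omega) (by omega)
  -- split pascal
  have pascal : ∀ r : ℕ, ((2 * g + 1).choose (r + 1) : ℤ)
      = ((2 * g).choose r : ℤ) + ((2 * g).choose (r + 1) : ℤ) := by
    intro r
    rw [← Nat.cast_add, ← Nat.choose_succ_succ]
  have split : ∀ r ∈ Finset.range (g - 1),
      (-1 : ℤ) ^ (r + 1) * ((2 * g + 1).choose (r + 1) : ℤ) *
          ((3 * g - 2 * r - 3).choose (2 * g - 1) : ℤ)
        = (-(( -1 : ℤ) ^ r * ((2 * g).choose r : ℤ) *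
              ((2 * g + (g - 2) - 2 * r - 1).choose (2 * g - 1) : ℤ)))
          + ((-1 : ℤ) ^ (r + 1) * ((2 * g).choose (r + 1) : ℤ) *
              ((2 * g + g - 2 * (r + 1) - 1).choose (2 * g - 1) : ℤ)) := by
    intro r hr
    simp only [Finset.mem_range] at hr
    have e1 : 3 * g - 2 * r - 3 = 2 * g + (g - 2) - 2 * r - 1 := by omega
    have e2 : 3 * g - 2 * r - 3 = 2 * g + g - 2 * (r + 1) - 1 := by omega
    rw [pascal r]
    rw [show ((3 * g - 2 * r - 3).choose (2 * g - 1) : ℤ)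
        = ((2 * g + (g - 2) - 2 * r - 1).choose (2 * g - 1) : ℤ) by rw [e1]]
    rw [show ((2 * g + (g - 2) - 2 * r - 1).choose (2 * g - 1) : ℤ)
        = ((2 * g + g - 2 * (r + 1) - 1).choose (2 * g - 1) : ℤ) by rw [← e1, e2]]
    ring_nf
  rw [Finset.sum_congr rfl split, Finset.sum_add_distrib, Finset.sum_neg_distrib]
  have hA := keyA
  rw [Finset.sum_range_succ'] at hA
  have h0 : (-1:ℤ)^0 * ((2*g).choose 0 : ℤ) *
      ((2*g + g - 2*0 - 1).choose (2*g-1) : ℤ)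
      = ((3*g-1).choose (2*g-1) : ℤ) := by
    rw [show 2*g + g - 2*0 - 1 = 3*g - 1 from by omega]
    norm_num
  rw [h0] at hA
  have hext : ∑ r ∈ Finset.range (g-1),
      (-1:ℤ)^(r+1) * ((2*g).choose (r+1) : ℤ) *
        ((2*g + g - 2*(r+1) - 1).choose (2*g-1) : ℤ)
      = ∑ r ∈ Finset.range g,
      (-1:ℤ)^(r+1) * ((2*g).choose (r+1) : ℤ) *
        ((2*g + g - 2*(r+1) - 1).choose (2*g-1) : ℤ) := by
    refine Finset.sum_subset (Finset.range_subset_range.2 (by omega)) ?_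
    intro x hx hnx
    simp only [Finset.mem_range] at hx hnx
    have hz : (2*g + g - 2*(x+1) - 1).choose (2*g-1) = 0 :=
      Nat.choose_eq_zero_of_lt (by omega)
    rw [hz]; push_cast; ring
  have hB := keyB
  rw [show g - 2 + 1 = g - 1 from by omega] at hB
  rw [hext, hB]
  linarith [hA]
end
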